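/- Let k and n be positive integers. A tableau T ∈ T_n^k is uniquely determined by the sequence of its row-1 entries: if two tableaux in T_n^k have the same first row, they are equal. Moreover, an increasing sequence t_1 < t_2 < ⋯ < t_n with t_1 = 1 occurs as the row-1 entries (left to right) of some T ∈ T_n^k if and only if t_j ≤ 1 + (j−1)(k+1) for all 1 ≤ j ≤ n. -/

import Mathlib

open scoped Classical

/-- Number of North steps (letters `true`) among the first `i` letters of `w`. -/
def upCount (w : List Bool) (i : ℕ) : ℕ := (w.take i).count true

/-- Number of East steps (letters `false`) among the first `i` letters of `w`. -/
def rightCount (w : List Bool) (i : ℕ) : ℕ := (w.take i).count false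

/-- `w` is an `(m,n)`-Dyck path: a word with `n` North letters (`true`) and `m` East
letters (`false`), each of whose prefixes with `b` North and `a` East letters
satisfies `b*m - a*n ≥ 0`. -/
def IsDyck (m n : ℕ) (w : List Bool) : Prop :=
  w.length = m + n ∧ w.count true = n ∧
  ∀ i, n * rightCount w i ≤ m * upCount w i

/-- The rank of the `(i+1)`-st step (0-indexed `i`) of `w`, namely `b*m - a*n` where
`b` and `a` are the numbers of North and East letters among the first `i` letters. -/
def rank (m n : ℕ) (w : List Bool) (i : ℕ) : ℤ :=
  (m : ℤ) * upCount w i - (n : ℤ) * rightCount w i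

/-- The sweep map: list the steps of `w` in increasing order of their ranks. -/
def sweep (m n : ℕ) (w : List Bool) : List Bool :=
  (((List.range w.length).mergeSort
      (fun i j => decide (rank m n w i ≤ rank m n w j))).map
    (fun i => w.getD i false))

/-- The word `EN(w)`: list the steps of `w` in increasing order of their end ranks
(the end rank of the `(i+1)`-st step is `rank w (i+1)`). -/
def sweepEN (m n : ℕ) (w : List Bool) : List Bool :=
  (((List.range w.length).mergeSort
      (fun i j => decide (rank m n w (i + 1) ≤ rank m n w (j + 1)))).map
    (fun i => w.getD i false))

/-- One step of the filling algorithm: place entry `p.1` according to letter `p.2`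
(`true` = S : start a new column; `false` = W : put it below the smallest active
entry, an active entry being the current bottom entry of a column of height `< k+1`). -/
def fillStep (k : ℕ) (cols : List (List ℕ)) (p : ℕ × Bool) : List (List ℕ) :=
  if p.2 then cols ++ [[p.1]]
  else
    match ((List.range cols.length).filter
        (fun j => (cols.getD j []).length < k + 1)).argmin
        (fun j => (cols.getD j []).getLastD 0) with
    | none => cols
    | some j => cols.set j ((cols.getD j []) ++ [p.1])

/-- The state (list of columns, each recorded top to bottom) of the filling algorithm
after the entries `1, …, t` have been placed according to the first `t` letters of `w`. -/
def fillColsUpTo (k : ℕ) (w : List Bool) (t : ℕ) : List (List ℕ) :=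
  ((List.range t).map (fun i => (i + 1, w.getD i false))).foldl (fillStep k) []

/-- The final state of the filling algorithm on the word `w` (entries
`1, …, m+n-1` placed, i.e. all letters but the last one processed). -/
def fillCols (k : ℕ) (w : List Bool) : List (List ℕ) :=
  fillColsUpTo k w (w.length - 1)

/-- The tableau `T(D)` produced by the filling algorithm, as a function
(row, column) ↦ entry, rows and columns 0-indexed. -/
def fillTableau (k n : ℕ) (w : List Bool) : Fin (k + 1) → Fin n → ℕ :=
  fun i j => ((fillCols k w).getD j []).getD i 0

/-- `T` fills the `(k+1) × n` array with `1, …, (k+1)n`, increasing along rows and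
columns. -/
def IsFilling (k n : ℕ) (T : Fin (k + 1) → Fin n → ℕ) : Prop :=
  (∀ i j, T i j ∈ Finset.Icc 1 ((k + 1) * n)) ∧
  Function.Injective (fun p : Fin (k + 1) × Fin n => T p.1 p.2) ∧
  (∀ i, StrictMono (T i)) ∧
  (∀ j, StrictMono (fun i => T i j))

/-- For all entries `a < b < c < d` of `T` with `d` directly below `a`, the entries
`b` and `c` do not lie in the same column. -/
def NoBadQuadruple (k n : ℕ) (T : Fin (k + 1) → Fin n → ℕ) : Prop :=
  ∀ (i : Fin (k + 1)) (hi : (i : ℕ) + 1 < k + 1) (j : Fin n)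
    (r r' : Fin (k + 1)) (c : Fin n), r < r' →
      ¬ (T i j < T r c ∧ T r c < T r' c ∧ T r' c < T ⟨(i : ℕ) + 1, hi⟩ j)

/-- The family `𝒯ₙᵏ` of tableaux. -/
def IsFussTableau (k n : ℕ) (T : Fin (k + 1) → Fin n → ℕ) : Prop :=
  IsFilling k n T ∧ NoBadQuadruple k n T

/-- A value `r` is marked for `T` when `r - 1` is a bottom-row entry of `T`. -/
def Marked (k n : ℕ) (T : Fin (k + 1) → Fin n → ℕ) (r : ℕ) : Prop :=
  ∃ j : Fin n, T (Fin.last k) j + 1 = r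

/-- One move of the walk `w(T)` on the values `1, …, M` (where `M = m + n`):
from a row-1 entry `x` move to `r + 1` where `r` is the bottom entry of the column
of `x`; from an entry `x` of one of the rows `2, …, k+1` move to the largest
unmarked value `≤ r`, where `r` is the entry directly above `x`; from `x = M`
move to the largest unmarked value `< M`. -/
noncomputable def walkStep (k n M : ℕ) (T : Fin (k + 1) → Fin n → ℕ) (x : ℕ) : ℕ :=
  if h : ∃ j : Fin n, T 0 j = x then
    T (Fin.last k) (Classical.choose h) + 1
  else if h2 : ∃ p : Fin (k + 1) × Fin n, T p.1 p.2 = x then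
    let p := Classical.choose h2
    ((((Finset.Icc 1 M).filter
        (fun y => y ≤ T (⟨(p.1 : ℕ) - 1, lt_of_le_of_lt (Nat.sub_le _ _) p.1.2⟩ : Fin (k + 1)) p.2
          ∧ ¬ Marked k n T y))).max).getD 0
  else
    ((((Finset.Icc 1 M).filter (fun y => y < M ∧ ¬ Marked k n T y))).max).getD 0

/-- The area of the path `w`: the number of lattice cells of the `m × n` rectangle
lying below the path whose interiors lie entirely above the diagonal.
The cell in column `x` and row `y` (0-indexed) has its interior above the diagonal
iff `n*(x+1) ≤ m*y`, and lies below the path iff the `(y+1)`-st North step of `w`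
occurs before the `(x+1)`-st East step. -/
def nthLetterIdx (w : List Bool) (b : Bool) (j : ℕ) : ℕ :=
  (((List.range w.length).filter (fun i => w.getD i false = b))).getD j 0

def area (m n : ℕ) (w : List Bool) : ℕ :=
  ((Finset.range m ×ˢ Finset.range n).filter
    (fun p => n * (p.1 + 1) ≤ m * p.2 ∧
      nthLetterIdx w true p.2 < nthLetterIdx w false p.1)).card

/-- The reduction `red(T)`: delete column 1 and replace each remaining entry `i` by
`i` minus the number of column-1 entries smaller than `i`. -/
def red (k n : ℕ) (T : Fin (k + 1) → Fin n → ℕ) : Fin (k + 1) → Fin (n - 1) → ℕ :=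
  fun i j =>
    let v := T i ⟨(j : ℕ) + 1, by have := j.2; omega⟩
    v - (Finset.univ.filter
      (fun u : Fin (k + 1) => T u ⟨0, by have := j.2; omega⟩ < v)).card

/-- The (finite) set of `(m,n)`-Dyck paths as a `Finset` of words. -/
noncomputable def dyckFinset (m n : ℕ) : Finset (List Bool) :=
  ((Finset.univ : Finset (Fin (m + n) → Bool)).image List.ofFn).filter
    (fun w => IsDyck m n w)

/-- A tableau `T ∈ 𝒯ₙᵏ` is uniquely determined by its first row;
and an increasing sequence `t` with `t 1 = 1` occurs as the first row of some
`T ∈ 𝒯ₙᵏ` iff `t j ≤ 1 + (j-1)(k+1)` for all `j`. -/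

noncomputable def st10rank {n : ℕ} (t : Fin n → ℕ) (v : ℕ) : ℕ :=
  ((Finset.Icc 1 v).filter (fun u => ¬ ∃ j, t j = u)).card

noncomputable def st10depAux (k : ℕ) {n : ℕ} (t : Fin n → ℕ) : ℕ → ℕ → ℕ
  | 0, _ => 0
  | v+1, u =>
    if u = v + 1 then
      if ∃ j, t j = v + 1 then 0
      else
        let p := Nat.nth (fun w => 0 < w ∧ w ≤ v ∧ st10depAux k t v w < k)
          (st10rank t (v+1) - 1)
        if p ≤ v ∧ st10depAux k t v p < k then st10depAux k t v p + 1 else 0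
    else st10depAux k t v u

noncomputable def st10dep (k : ℕ) {n : ℕ} (t : Fin n → ℕ) (v : ℕ) : ℕ :=
  st10depAux k t v v

noncomputable def st10par (k : ℕ) {n : ℕ} (t : Fin n → ℕ) (v : ℕ) : ℕ :=
  Nat.nth (fun w => 0 < w ∧ w < v ∧ st10dep k t w < k) (st10rank t v - 1)

lemma st10depAux_eq (k : ℕ) {n : ℕ} (t : Fin n → ℕ) :
    ∀ (v u : ℕ), u ≤ v → st10depAux k t v u = st10dep k t u := by
  intro v
  induction v with
  | zero => intro u hu; interval_cases u; rfl
  | succ v ih =>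
    intro u hu
    rcases eq_or_lt_of_le hu with h | h
    · subst h; rfl
    · have hu' : u ≤ v := by omega
      show st10depAux k t (v+1) u = _
      rw [st10depAux, if_neg (by omega)]
      exact ih u hu' 

lemma st10dep_top (k : ℕ) {n : ℕ} (t : Fin n → ℕ) (v : ℕ) (h : ∃ j, t j = v) :
    st10dep k t v = 0 := by
  cases v with
  | zero => rfl
  | succ v => rw [st10dep, st10depAux, if_pos rfl, if_pos h]

lemma st10dep_succ (k : ℕ) {n : ℕ} (t : Fin n → ℕ) (v : ℕ) (hv : 1 ≤ v)
    (h : ¬ ∃ j, t j = v) :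
    st10dep k t v = if st10par k t v < v ∧ st10dep k t (st10par k t v) < k
      then st10dep k t (st10par k t v) + 1 else 0 := by
  obtain ⟨w, rfl⟩ : ∃ w, v = w + 1 := ⟨v - 1, by omega⟩
  have hpred : (fun u => 0 < u ∧ u ≤ w ∧ st10depAux k t w u < k)
      = (fun u => 0 < u ∧ u < w + 1 ∧ st10dep k t u < k) := by
    funext u
    by_cases hu : u ≤ w
    · rw [st10depAux_eq k t w u hu]
      simp [Nat.lt_succ_iff, hu]
    · simp [hu, show ¬ u < w + 1 by omega]
  conv_lhs => rw [st10dep, st10depAux, if_pos rfl, if_neg h]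
  simp only [hpred]
  rw [show Nat.nth (fun u => 0 < u ∧ u < w + 1 ∧ st10dep k t u < k) (st10rank t (w+1) - 1)
      = st10par k t (w+1) from rfl]
  by_cases hpw : st10par k t (w+1) ≤ w
  · rw [st10depAux_eq k t w _ hpw]
    simp [Nat.lt_succ_iff, hpw]
  · simp [hpw, show ¬ st10par k t (w+1) < w + 1 by omega]

lemma st10dep_le (k : ℕ) {n : ℕ} (t : Fin n → ℕ) (v : ℕ) (hk : 0 < k) :
    st10dep k t v ≤ k := by
  cases v with
  | zero => rw [show st10dep k t 0 = 0 from rfl]; omega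
  | succ v =>
    by_cases h : ∃ j, t j = v + 1
    · rw [st10dep_top k t _ h]; omega
    · rw [st10dep_succ k t _ (by omega) h]
      split
      · next hg => omega
      · omega

-- the active-bottom predicate and finset
def st10Bp (k : ℕ) {n : ℕ} (t : Fin n → ℕ) (v : ℕ) : ℕ → Prop :=
  fun w => 0 < w ∧ w < v ∧ st10dep k t w < k

noncomputable def st10B (k : ℕ) {n : ℕ} (t : Fin n → ℕ) (v : ℕ) : Finset ℕ :=
  (Finset.range v).filter (fun w => 0 < w ∧ st10dep k t w < k)

lemma st10Bp_fin (k : ℕ) {n : ℕ} (t : Fin n → ℕ) (v : ℕ) :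
    (Set.ofPred (st10Bp k t v)).Finite :=
  Set.Finite.subset (Set.finite_Iio v) (fun w hw => hw.2.1)

lemma st10Bp_card (k : ℕ) {n : ℕ} (t : Fin n → ℕ) (v : ℕ)
    (hf : (Set.ofPred (st10Bp k t v)).Finite) :
    hf.toFinset.card = (st10B k t v).card := by
  congr 1
  ext w
  simp [st10Bp, st10B, Finset.mem_range, and_comm, and_assoc, and_left_comm]

lemma st10rank_pos {n : ℕ} (t : Fin n → ℕ) (v : ℕ) (hv : 1 ≤ v)
    (hnt : ¬ ∃ j, t j = v) : 1 ≤ st10rank t v := by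
  rw [st10rank]
  exact Finset.card_pos.2 ⟨v, Finset.mem_filter.2 ⟨Finset.mem_Icc.2 ⟨hv, le_rfl⟩, hnt⟩⟩

lemma st10rank_lt {n : ℕ} (t : Fin n → ℕ) {v v' : ℕ} (hv : v < v')
    (hnt : ¬ ∃ j, t j = v') : st10rank t v < st10rank t v' := by
  apply Finset.card_lt_card
  constructor
  · apply Finset.filter_subset_filter
    exact Finset.Icc_subset_Icc_right (by omega)
  · intro hsub
    have := hsub (Finset.mem_filter.2 ⟨Finset.mem_Icc.2 ⟨by omega, le_rfl⟩, hnt⟩)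
    have := (Finset.mem_filter.1 this).1
    rw [Finset.mem_Icc] at this
    omega

lemma st10par_mem (k : ℕ) {n : ℕ} (t : Fin n → ℕ) (v : ℕ)
    (hr : 1 ≤ st10rank t v) (hav : st10rank t v ≤ (st10B k t v).card) :
    st10Bp k t v (st10par k t v) := by
  apply Nat.nth_mem_of_lt_card (st10Bp_fin k t v)
  rw [st10Bp_card k t v]
  omega

lemma st10par_count (k : ℕ) {n : ℕ} (t : Fin n → ℕ) (v : ℕ)
    (hr : 1 ≤ st10rank t v) (hav : st10rank t v ≤ (st10B k t v).card) :
    Nat.count (st10Bp k t v) (st10par k t v) = st10rank t v - 1 := by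
  apply Nat.count_nth_of_lt_card_finite (st10Bp_fin k t v)
  rw [st10Bp_card k t v]
  omega

lemma st10nth_agree (k : ℕ) {n : ℕ} (t : Fin n → ℕ) {v v' i : ℕ} (hvv : v ≤ v')
    (hi : i < (st10B k t v).card) :
    Nat.nth (st10Bp k t v) i = Nat.nth (st10Bp k t v') i := by
  have hi' : i < (st10Bp_fin k t v).toFinset.card := by rw [st10Bp_card]; omega
  set x := Nat.nth (st10Bp k t v) i with hx
  have hmem : st10Bp k t v x := Nat.nth_mem_of_lt_card (st10Bp_fin k t v) hi'
  have hcount : Nat.count (st10Bp k t v) x = i :=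
    Nat.count_nth_of_lt_card_finite (st10Bp_fin k t v) hi'
  have hmem' : st10Bp k t v' x := ⟨hmem.1, lt_of_lt_of_le hmem.2.1 hvv, hmem.2.2⟩
  have hcount' : Nat.count (st10Bp k t v') x = i := by
    rw [← hcount, Nat.count_eq_card_filter_range, Nat.count_eq_card_filter_range]
    congr 1
    apply Finset.filter_congr
    intro w hw
    simp only [Finset.mem_range] at hw
    have hxv : x < v := hmem.2.1
    simp only [st10Bp, eq_iff_iff]
    exact ⟨fun ⟨a, b, c⟩ => ⟨a, by omega, c⟩, fun ⟨a, b, c⟩ => ⟨a, by omega, c⟩⟩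
  rw [← hcount', Nat.nth_count hmem']

lemma st10par_mono (k : ℕ) {n : ℕ} (t : Fin n → ℕ) {v v' : ℕ} (hv : 1 ≤ v)
    (hvv : v < v') (hnt : ¬ ∃ j, t j = v) (hnt' : ¬ ∃ j, t j = v')
    (hav : st10rank t v ≤ (st10B k t v).card)
    (hav' : st10rank t v' ≤ (st10B k t v').card) :
    st10par k t v < st10par k t v' := by
  have hr := st10rank_pos t v hv hnt
  have hrr := st10rank_lt t hvv hnt'
  have h1 : st10par k t v = Nat.nth (st10Bp k t v') (st10rank t v - 1) := by
    rw [st10par, ← st10nth_agree k t hvv.le (by omega)]; rfl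
  rw [h1, st10par]
  apply Nat.nth_lt_nth_of_lt_card (st10Bp_fin k t v') (by omega)
  rw [st10Bp_card k t v']
  omega

section Chains

variable {k V n : ℕ} {t : Fin n → ℕ}

lemma st10step
    (HI : ∀ w, w < V → 1 ≤ w → (¬ ∃ j, t j = w) → st10rank t w ≤ (st10B k t w).card)
    {w : ℕ} (hw1 : 1 ≤ w) (hwV : w < V) (hnt : ¬ ∃ j, t j = w) :
    0 < st10par k t w ∧ st10par k t w < w ∧ st10dep k t (st10par k t w) < k ∧
      st10dep k t w = st10dep k t (st10par k t w) + 1 := by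
  have hav := HI w hwV hw1 hnt
  have hr := st10rank_pos t w hw1 hnt
  have hm := st10par_mem k t w hr hav
  refine ⟨hm.1, hm.2.1, hm.2.2, ?_⟩
  rw [st10dep_succ k t w hw1 hnt, if_pos ⟨hm.2.1, hm.2.2⟩]

lemma st10dep_pos
    (HI : ∀ w, w < V → 1 ≤ w → (¬ ∃ j, t j = w) → st10rank t w ≤ (st10B k t w).card)
    {w : ℕ} (hw1 : 1 ≤ w) (hwV : w < V) (hnt : ¬ ∃ j, t j = w) :
    0 < st10dep k t w := by
  have := (st10step HI hw1 hwV hnt).2.2.2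
  omega

lemma st10chain
    (HI : ∀ w, w < V → 1 ≤ w → (¬ ∃ j, t j = w) → st10rank t w ≤ (st10B k t w).card) :
    ∀ (i u : ℕ), 1 ≤ u → u < V → i ≤ st10dep k t u →
      st10dep k t ((st10par k t)^[i] u) = st10dep k t u - i ∧
        1 ≤ (st10par k t)^[i] u ∧ (st10par k t)^[i] u + i ≤ u := by
  intro i
  induction i with
  | zero => intro u h1 _ _; simpa using h1
  | succ i ih =>
    intro u hu1 huV hi
    obtain ⟨hd, h1, hle⟩ := ih u hu1 huV (by omega)
    set x := (st10par k t)^[i] u with hxdef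
    have hxnt : ¬ ∃ j, t j = x := by
      intro h
      have := st10dep_top k t x h
      omega
    have hxV : x < V := by omega
    obtain ⟨p1, p2, p3, p4⟩ := st10step HI h1 hxV hxnt
    rw [Function.iterate_succ_apply', ← hxdef]
    exact ⟨by omega, by omega, by omega⟩

lemma st10parInj
    (HI : ∀ w, w < V → 1 ≤ w → (¬ ∃ j, t j = w) → st10rank t w ≤ (st10B k t w).card)
    {w w' : ℕ} (hw1 : 1 ≤ w) (hwV : w < V) (hnt : ¬ ∃ j, t j = w)
    (hw1' : 1 ≤ w') (hwV' : w' < V) (hnt' : ¬ ∃ j, t j = w') (hne : w ≠ w') :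
    st10par k t w ≠ st10par k t w' := by
  rcases lt_trichotomy w w' with h | h | h
  · exact (st10par_mono k t hw1 h hnt hnt' (HI w hwV hw1 hnt) (HI w' hwV' hw1' hnt')).ne
  · exact absurd h hne
  · exact (st10par_mono k t hw1' h hnt' hnt (HI w' hwV' hw1' hnt') (HI w hwV hw1 hnt)).ne'

lemma st10chainInj
    (HI : ∀ w, w < V → 1 ≤ w → (¬ ∃ j, t j = w) → st10rank t w ≤ (st10B k t w).card) :
    ∀ (i : ℕ) {u u' : ℕ}, 1 ≤ u → u < V → 1 ≤ u' → u' < V →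
      i ≤ st10dep k t u → st10dep k t u = st10dep k t u' →
      (st10par k t)^[i] u = (st10par k t)^[i] u' → u = u' := by
  intro i
  induction i with
  | zero => simp
  | succ i ih =>
    intro u u' hu1 huV hu1' huV' hi hdd heq
    obtain ⟨hd, h1, hle⟩ := st10chain HI i u hu1 huV (by omega)
    obtain ⟨hd', h1', hle'⟩ := st10chain HI i u' hu1' huV' (by omega)
    set x := (st10par k t)^[i] u with hxdef
    set x' := (st10par k t)^[i] u' with hxdef'
    have hxnt : ¬ ∃ j, t j = x := by
      intro h; have := st10dep_top k t x h; omega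
    have hxnt' : ¬ ∃ j, t j = x' := by
      intro h; have := st10dep_top k t x' h; omega
    have hxx : x = x' := by
      by_contra hne
      exact st10parInj HI h1 (by omega) hxnt h1' (by omega) hxnt' hne
        (by rwa [Function.iterate_succ_apply', Function.iterate_succ_apply',
          ← hxdef, ← hxdef'] at heq)
    exact ih hu1 huV hu1' huV' (by omega) hdd hxx

end Chains

section Avail

variable {k n : ℕ} {t : Fin n → ℕ}

theorem st10avail (hk : 0 < k) (hn : 0 < n) (hmono : StrictMono t)
    (ht1 : t ⟨0, hn⟩ = 1) (hbd : ∀ j : Fin n, t j ≤ 1 + (j : ℕ) * (k + 1)) :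
    ∀ v, 1 ≤ v → v ≤ (k+1)*n → (¬ ∃ j, t j = v) →
      st10rank t v ≤ (st10B k t v).card := by
  have t1 : ∀ j : Fin n, 1 ≤ t j := fun j => by
    have := hmono.monotone (show (⟨0, hn⟩ : Fin n) ≤ j by simp [Fin.le_def])
    omega
  intro v
  induction v using Nat.strong_induction_on with
  | _ v IH =>
  intro hv1 hvM hnt
  have HI : ∀ w, w < v → 1 ≤ w → (¬ ∃ j, t j = w) →
      st10rank t w ≤ (st10B k t w).card := fun w hw h1 hnt' =>
    IH w hw h1 (by omega) hnt'
  set K := (Finset.Icc 1 (v-1)).filter (fun u => st10dep k t u = k) with hK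
  set S := (Finset.univ.filter (fun j : Fin n => t j < v)) with hS
  have hKmem : ∀ u ∈ K, 1 ≤ u ∧ u ≤ v - 1 ∧ st10dep k t u = k := by
    intro u hu
    simp only [hK, Finset.mem_filter, Finset.mem_Icc] at hu
    exact ⟨hu.1.1, hu.1.2, hu.2⟩
  -- chains facts for elements of K
  have hchainK : ∀ u ∈ K, ∀ i, i ≤ k →
      st10dep k t ((st10par k t)^[i] u) = k - i ∧ 1 ≤ (st10par k t)^[i] u ∧
        (st10par k t)^[i] u + i ≤ u := by
    intro u hu i hi
    obtain ⟨h1, h2, h3⟩ := hKmem u hu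
    have := st10chain HI i u h1 (by omega) (by omega)
    rw [h3] at this
    exact this
  -- roots are tops
  have hroot : ∀ u ∈ K, ∃ j ∈ S, t j = (st10par k t)^[k] u := by
    intro u hu
    obtain ⟨h1, h2, h3⟩ := hKmem u hu
    obtain ⟨hd, hr1, hrle⟩ := hchainK u hu k le_rfl
    have hex : ∃ j, t j = (st10par k t)^[k] u := by
      by_contra hnt2
      have := st10dep_pos HI hr1 (show (st10par k t)^[k] u < v by omega) hnt2
      omega
    obtain ⟨j, hj⟩ := hex
    refine ⟨j, ?_, hj⟩
    simp only [hS, Finset.mem_filter, Finset.mem_univ, true_and]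
    omega
  -- injectivity of root on K
  have hKs : K.card ≤ S.card := by
    have h1 : K.card ≤ (S.image t).card := by
      apply Finset.card_le_card_of_injOn (fun u => (st10par k t)^[k] u)
      · intro u hu
        obtain ⟨j, hjS, hj⟩ := hroot u hu
        exact Finset.mem_image.2 ⟨j, hjS, hj⟩
      · intro u hu u' hu' heq
        obtain ⟨a1, a2, a3⟩ := hKmem u (by simpa using hu)
        obtain ⟨b1, b2, b3⟩ := hKmem u' (by simpa using hu')
        exact st10chainInj HI k a1 (by omega) b1 (by omega) (by omega)
          (by omega) heq
    rwa [Finset.card_image_of_injective _ hmono.injective] at h1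
  -- biUnion counting : (k+1) * K.card ≤ v - 1
  have hcount : (k+1) * K.card ≤ v - 1 := by
    classical
    set f : ℕ → Finset ℕ :=
      fun u => (Finset.range (k+1)).image (fun i => (st10par k t)^[i] u) with hf
    have himgcard : ∀ u ∈ K, (f u).card = k + 1 := by
      intro u hu
      rw [hf, Finset.card_image_of_injOn, Finset.card_range]
      intro i hi i' hi' heq
      simp only [Finset.coe_range, Set.mem_Iio] at hi hi'
      have d1 := (hchainK u hu i (by omega)).1
      have d2 := (hchainK u hu i' (by omega)).1
      rw [show (st10par k t)^[i] u = (st10par k t)^[i'] u from heq] at d1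
      omega
    have hdisj : ∀ u ∈ K, ∀ u' ∈ K, u ≠ u' → Disjoint (f u) (f u') := by
      intro u hu u' hu' hne
      rw [Finset.disjoint_left]
      intro w hw hw'
      simp only [hf, Finset.mem_image, Finset.mem_range] at hw hw'
      obtain ⟨i, hi, hiw⟩ := hw
      obtain ⟨i', hi', hiw'⟩ := hw'
      have d1 := (hchainK u hu i (by omega)).1
      have d2 := (hchainK u' hu' i' (by omega)).1
      rw [hiw] at d1; rw [hiw'] at d2
      have hii : i = i' := by omega
      subst hii
      obtain ⟨a1, a2, a3⟩ := hKmem u hu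
      obtain ⟨b1, b2, b3⟩ := hKmem u' hu'
      exact hne (st10chainInj HI i a1 (by omega) b1 (by omega) (by omega)
        (by omega) (hiw.trans hiw'.symm))
    have hcard : (K.biUnion f).card = (k+1) * K.card := by
      rw [Finset.card_biUnion hdisj, Finset.sum_congr rfl himgcard,
        Finset.sum_const, smul_eq_mul, mul_comm]
    have hsub : K.biUnion f ⊆ Finset.Icc 1 (v-1) := by
      intro w hw
      simp only [Finset.mem_biUnion, hf, Finset.mem_image, Finset.mem_range] at hw
      obtain ⟨u, hu, i, hi, hiw⟩ := hw
      obtain ⟨c1, c2, c3⟩ := hchainK u hu i (by omega)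
      obtain ⟨a1, a2, a3⟩ := hKmem u hu
      rw [Finset.mem_Icc]
      omega
    have := Finset.card_le_card hsub
    rw [hcard, Nat.card_Icc] at this
    omega
  -- S.card ≤ v - 1
  have hsv : S.card ≤ v - 1 := by
    have h1 : (S.image t).card ≤ (Finset.Icc 1 (v-1)).card := by
      apply Finset.card_le_card
      intro w hw
      obtain ⟨j, hjS, hj⟩ := Finset.mem_image.1 hw
      simp only [hS, Finset.mem_filter, Finset.mem_univ, true_and] at hjS
      rw [Finset.mem_Icc]
      have := t1 j
      omega
    rw [Finset.card_image_of_injective _ hmono.injective, Nat.card_Icc] at h1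
    omega
  -- K.card < S.card
  have hKS : K.card < S.card := by
    rcases lt_or_ge K.card S.card with h | h
    · exact h
    · exfalso
      have hKSe : K.card = S.card := le_antisymm hKs h
      by_cases hsn : S.card < n
      · set j₀ : Fin n := ⟨S.card, hsn⟩ with hj₀
        have hts : v ≤ t j₀ := by
          by_contra hlt
          push_neg at hlt
          have hr : (Finset.range (S.card + 1)).card ≤ S.card := by
            apply Finset.card_le_card_of_injOn (fun i => (⟨i % n, Nat.mod_lt _ hn⟩ : Fin n))
            · intro i hi
              simp only [Finset.mem_coe, Finset.mem_range] at hi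
              have him : i % n = i := Nat.mod_eq_of_lt (by omega)
              simp only [hS, Finset.mem_coe, Finset.mem_filter, Finset.mem_univ, true_and]
              calc t ⟨i % n, _⟩ ≤ t j₀ := hmono.monotone (by simp only [Fin.le_def, hj₀, Fin.val_mk]; omega)
                _ < v := hlt
            · intro a ha b hb hab
              simp only [Finset.mem_coe, Finset.mem_range] at ha hb
              have ha' : a % n = a := Nat.mod_eq_of_lt (by omega)
              have hb' : b % n = b := Nat.mod_eq_of_lt (by omega)
              have := congrArg Fin.val hab
              simp only [ha', hb'] at this
              exact this
          rw [Finset.card_range] at hr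
          omega
        have hb := hbd j₀
        have hcm : (j₀ : ℕ) * (k + 1) = (k+1) * K.card := by
          rw [hj₀, hKSe]; ring_nf
        have htop : t j₀ = v := by omega
        exact hnt ⟨j₀, htop⟩
      · push_neg at hsn
        have : (k+1)*n ≤ (k+1)*K.card := Nat.mul_le_mul_left _ (by omega)
        omega
  -- rank v + S.card = v
  have hranks : st10rank t v + S.card = v := by
    have hcards : ((Finset.Icc 1 v).filter (fun u => ∃ j, t j = u)).card = S.card := by
      symm
      apply Finset.card_bij (fun j _ => t j)
      · intro j hj
        simp only [hS, Finset.mem_filter, Finset.mem_univ, true_and] at hj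
        simp only [Finset.mem_filter, Finset.mem_Icc]
        exact ⟨⟨t1 j, by omega⟩, j, rfl⟩
      · intro a _ b _ hab
        exact hmono.injective hab
      · intro u hu
        simp only [Finset.mem_filter, Finset.mem_Icc] at hu
        obtain ⟨⟨hu1, hu2⟩, j, hj⟩ := hu
        have : t j < v := by
          rcases eq_or_lt_of_le (hj ▸ hu2 : t j ≤ v) with h | h
          · exact absurd ⟨j, h⟩ hnt
          · exact h
        exact ⟨j, by simp only [hS, Finset.mem_filter, Finset.mem_univ, true_and]; exact this, hj⟩
    have hpart := Finset.card_filter_add_card_filter_not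
      (s := Finset.Icc 1 v) (p := fun u => ∃ j, t j = u)
    rw [Nat.card_Icc, hcards] at hpart
    rw [st10rank]
    omega
  -- card st10B v + K.card = v - 1
  have hBcard : (st10B k t v).card + K.card = v - 1 := by
    have hBeq : st10B k t v = (Finset.Icc 1 (v-1)).filter (fun u => st10dep k t u < k) := by
      ext w
      simp only [st10B, Finset.mem_filter, Finset.mem_range, Finset.mem_Icc]
      constructor
      · rintro ⟨h1, h2, h3⟩; exact ⟨⟨h2, by omega⟩, h3⟩
      · rintro ⟨⟨h1, h2⟩, h3⟩; exact ⟨by omega, by omega, h3⟩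
    have hKeq : K = (Finset.Icc 1 (v-1)).filter (fun u => ¬ st10dep k t u < k) := by
      rw [hK]
      apply Finset.filter_congr
      intro w _
      have := st10dep_le k t w hk
      simp only [eq_iff_iff, not_lt]
      omega
    rw [hBeq, hKeq, Finset.card_filter_add_card_filter_not, Nat.card_Icc]
    omega
  omega

end Avail

noncomputable def st10root (k : ℕ) {n : ℕ} (t : Fin n → ℕ) (u : ℕ) : ℕ :=
  (st10par k t)^[st10dep k t u] u

section Global

variable {k n : ℕ} {t : Fin n → ℕ}

lemma st10_t_le (hk : 0 < k) (hn : 0 < n)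
    (hbd : ∀ j : Fin n, t j ≤ 1 + (j : ℕ) * (k + 1)) (j : Fin n) :
    t j ≤ (k+1)*n := by
  have h1 := hbd j
  have h2 : (j : ℕ) * (k+1) ≤ (n-1) * (k+1) :=
    Nat.mul_le_mul_right _ (by have := j.2; omega)
  have h3 : (n-1) * (k+1) + (k+1) = n * (k+1) := by
    rw [← Nat.succ_mul]
    congr 1
    omega
  have h4 : n * (k+1) = (k+1) * n := mul_comm _ _
  omega

variable (hk : 0 < k) (hn : 0 < n) (hmono : StrictMono t)
    (ht1 : t ⟨0, hn⟩ = 1) (hbd : ∀ j : Fin n, t j ≤ 1 + (j : ℕ) * (k + 1))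

include hk hn hmono ht1 hbd in
lemma st10HAV :
    ∀ w, w < (k+1)*n + 1 → 1 ≤ w → (¬ ∃ j, t j = w) →
      st10rank t w ≤ (st10B k t w).card := fun w hw h1 hnt =>
  st10avail hk hn hmono ht1 hbd w h1 (by omega) hnt

include hn hmono ht1 in
lemma st10_t_ge (j : Fin n) : 1 ≤ t j := by
  have := hmono.monotone (show (⟨0, hn⟩ : Fin n) ≤ j by simp [Fin.le_def])
  omega

include hk hn hmono ht1 hbd in
lemma st10class0 :
    (Finset.Icc 1 ((k+1)*n)).filter (fun u => st10dep k t u = 0)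
      = Finset.univ.image t := by
  ext u
  simp only [Finset.mem_filter, Finset.mem_Icc, Finset.mem_image, Finset.mem_univ,
    true_and]
  constructor
  · rintro ⟨⟨h1, h2⟩, h3⟩
    by_contra hnt
    have := st10dep_pos (st10HAV hk hn hmono ht1 hbd) h1 (by omega) hnt
    omega
  · rintro ⟨j, rfl⟩
    exact ⟨⟨st10_t_ge hn hmono ht1 j, st10_t_le hk hn hbd j⟩, st10dep_top k t _ ⟨j, rfl⟩⟩

include hk hn hmono ht1 hbd in
lemma st10class_card : ∀ i ≤ k,
    ((Finset.Icc 1 ((k+1)*n)).filter (fun u => st10dep k t u = i)).card = n := by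
  have HAV := st10HAV hk hn hmono ht1 hbd
  set N : ℕ → ℕ :=
    fun i => ((Finset.Icc 1 ((k+1)*n)).filter (fun u => st10dep k t u = i)).card with hN
  have hN0 : N 0 = n := by
    rw [hN]
    simp only
    rw [st10class0 hk hn hmono ht1 hbd,
      Finset.card_image_of_injective _ hmono.injective]
    simp
  have hstep : ∀ i, N (i+1) ≤ N i := by
    intro i
    apply Finset.card_le_card_of_injOn (st10par k t)
    · intro u hu
      simp only [Finset.mem_coe, Finset.mem_filter, Finset.mem_Icc] at hu ⊢
      obtain ⟨⟨h1, h2⟩, h3⟩ := hu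
      have hnt : ¬ ∃ j, t j = u := by
        intro h; have := st10dep_top k t u h; omega
      obtain ⟨p1, p2, p3, p4⟩ := st10step HAV h1 (by omega) hnt
      exact ⟨⟨by omega, by omega⟩, by omega⟩
    · intro u hu u' hu' heq
      simp only [Finset.coe_filter, Set.mem_setOf_eq, Finset.mem_Icc] at hu hu'
      obtain ⟨⟨h1, h2⟩, h3⟩ := hu
      obtain ⟨⟨h1', h2'⟩, h3'⟩ := hu'
      by_contra hne
      have hnt : ¬ ∃ j, t j = u := by
        intro h; have := st10dep_top k t u h; omega
      have hnt' : ¬ ∃ j, t j = u' := by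
        intro h; have := st10dep_top k t u' h; omega
      exact st10parInj HAV h1 (by omega) hnt h1' (by omega) hnt' hne heq
  have hle : ∀ i, N i ≤ n := by
    intro i
    induction i with
    | zero => omega
    | succ i ih => exact le_trans (hstep i) ih
  have hsum : ∑ i ∈ Finset.range (k+1), N i = (k+1)*n := by
    rw [hN]
    simp only
    rw [← Finset.card_biUnion]
    · have hset : (Finset.range (k+1)).biUnion
          (fun i => (Finset.Icc 1 ((k+1)*n)).filter (fun u => st10dep k t u = i))
          = Finset.Icc 1 ((k+1)*n) := by
        ext u
        simp only [Finset.mem_biUnion, Finset.mem_filter, Finset.mem_range]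
        constructor
        · rintro ⟨i, _, h, _⟩; exact h
        · intro h
          exact ⟨st10dep k t u, by have := st10dep_le k t u hk; omega, h, rfl⟩
      rw [hset, Nat.card_Icc]
      omega
    · intro i _ i' _ hne
      rw [Function.onFun, Finset.disjoint_left]
      intro u hu hu'
      simp only [Finset.mem_filter] at hu hu'
      exact hne (hu.2 ▸ hu'.2 ▸ rfl)
  intro i hi
  show N i = n
  by_contra hne
  have hlt : N i < n := lt_of_le_of_ne (hle i) hne
  have : ∑ i ∈ Finset.range (k+1), N i < ∑ _i ∈ Finset.range (k+1), n := by
    apply Finset.sum_lt_sum (fun i _ => hle i)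
    exact ⟨i, Finset.mem_range.2 (by omega), hlt⟩
  rw [hsum, Finset.sum_const, Finset.card_range, smul_eq_mul] at this
  omega

include hk hn hmono ht1 hbd in
lemma st10root_top {u : ℕ} (hu1 : 1 ≤ u) (huM : u ≤ (k+1)*n) :
    ∃ j : Fin n, t j = st10root k t u ∧ st10dep k t (st10root k t u) = 0 ∧
      1 ≤ st10root k t u ∧ st10root k t u ≤ u := by
  have HAV := st10HAV hk hn hmono ht1 hbd
  obtain ⟨hd, h1, hle⟩ := st10chain HAV (st10dep k t u) u hu1 (by omega) le_rfl
  rw [show (st10par k t)^[st10dep k t u] u = st10root k t u from rfl] at hd h1 hle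
  have hd0 : st10dep k t (st10root k t u) = 0 := by omega
  have hex : ∃ j, t j = st10root k t u := by
    by_contra hnt
    have := st10dep_pos HAV h1 (by omega) hnt
    omega
  obtain ⟨j, hj⟩ := hex
  exact ⟨j, hj, hd0, h1, by omega⟩

include hk hn hmono ht1 hbd in
lemma st10exu : ∀ i ≤ k, ∀ j : Fin n,
    ∃! u, (u ∈ Finset.Icc 1 ((k+1)*n) ∧ st10dep k t u = i ∧ st10root k t u = t j) := by
  have HAV := st10HAV hk hn hmono ht1 hbd
  intro i hi j
  have hcard0 := st10class_card hk hn hmono ht1 hbd 0 (by omega)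
  have hcardi := st10class_card hk hn hmono ht1 hbd i hi
  set Ci := (Finset.Icc 1 ((k+1)*n)).filter (fun u => st10dep k t u = i) with hCi
  set C0 := (Finset.Icc 1 ((k+1)*n)).filter (fun u => st10dep k t u = 0) with hC0
  have hmaps : ∀ u ∈ Ci, st10root k t u ∈ C0 := by
    intro u hu
    simp only [hCi, Finset.mem_filter, Finset.mem_Icc] at hu
    obtain ⟨j', hj', hd0, h1, hle⟩ :=
      st10root_top hk hn hmono ht1 hbd hu.1.1 hu.1.2
    simp only [hC0, Finset.mem_filter, Finset.mem_Icc]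
    exact ⟨⟨h1, by omega⟩, hd0⟩
  have hinj : ∀ (u u' : ℕ), u ∈ Ci → u' ∈ Ci → st10root k t u = st10root k t u' → u = u' := by
    intro u u' hu hu' heq
    simp only [hCi, Finset.mem_filter, Finset.mem_Icc] at hu hu'
    apply st10chainInj HAV i hu.1.1 (by omega) hu'.1.1 (by omega)
      (le_of_eq hu.2.symm) (hu.2.trans hu'.2.symm)
    rw [show (st10par k t)^[i] u = st10root k t u by rw [st10root, hu.2],
      show (st10par k t)^[i] u' = st10root k t u' by rw [st10root, hu'.2]]
    exact heq
  have htj : t j ∈ C0 := by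
    rw [hC0, st10class0 hk hn hmono ht1 hbd]
    exact Finset.mem_image.2 ⟨j, Finset.mem_univ j, rfl⟩
  obtain ⟨u, hu, huj⟩ := Finset.surj_on_of_inj_on_of_card_le
    (fun u _ => st10root k t u) hmaps hinj (by omega) (t j) htj
  refine ⟨u, ?_, ?_⟩
  · simp only [hCi, Finset.mem_filter] at hu
    exact ⟨hu.1, hu.2, huj.symm⟩
  · intro u' hu'
    apply hinj u' u
    · simp only [hCi, Finset.mem_filter]
      exact ⟨hu'.1, hu'.2.1⟩
    · exact hu
    · rw [hu'.2.2, huj]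

end Global

section Fuss

variable {k n : ℕ}

lemma fuss_surj {T : Fin (k+1) → Fin n → ℕ} (hT : IsFilling k n T) :
    ∀ v, 1 ≤ v → v ≤ (k+1)*n → ∃ p : Fin (k+1) × Fin n, T p.1 p.2 = v := by
  intro v h1 h2
  have hcard : (Finset.univ.image (fun p : Fin (k+1) × Fin n => T p.1 p.2)).card
      = (k+1)*n := by
    rw [Finset.card_image_of_injective _ hT.2.1, Finset.card_univ, Fintype.card_prod,
      Fintype.card_fin, Fintype.card_fin]
  have himg : (Finset.univ.image (fun p : Fin (k+1) × Fin n => T p.1 p.2))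
      = Finset.Icc 1 ((k+1)*n) := by
    apply Finset.eq_of_subset_of_card_le
    · intro w hw
      obtain ⟨p, _, rfl⟩ := Finset.mem_image.1 hw
      exact hT.1 p.1 p.2
    · rw [hcard, Nat.card_Icc]
      omega
  have : v ∈ Finset.univ.image (fun p : Fin (k+1) × Fin n => T p.1 p.2) := by
    rw [himg]; exact Finset.mem_Icc.2 ⟨h1, h2⟩
  obtain ⟨p, _, hp⟩ := Finset.mem_image.1 this
  exact ⟨p, hp⟩

lemma fuss_min {T : Fin (k+1) → Fin n → ℕ} (hT : IsFussTableau k n T)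
    {i₀ : ℕ} (hi : i₀ + 1 < k + 1) {j : Fin n}
    {r : ℕ} (hr : r + 1 < k + 1) {c : Fin n}
    (h1 : T ⟨r, Nat.lt_of_succ_lt hr⟩ c < T ⟨i₀+1, hi⟩ j)
    (h2 : T ⟨i₀+1, hi⟩ j < T ⟨r+1, hr⟩ c) :
    T ⟨i₀, Nat.lt_of_succ_lt hi⟩ j ≤ T ⟨r, Nat.lt_of_succ_lt hr⟩ c := by
  by_contra hlt
  push_neg at hlt
  have hNBQ := hT.2 ⟨r, Nat.lt_of_succ_lt hr⟩ hr c ⟨i₀, Nat.lt_of_succ_lt hi⟩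
    ⟨i₀+1, hi⟩ j (by simp [Fin.lt_def])
  apply hNBQ
  refine ⟨hlt, ?_, h2⟩
  exact hT.1.2.2.2 j
    (show (⟨i₀, Nat.lt_of_succ_lt hi⟩ : Fin (k+1)) < ⟨i₀+1, hi⟩ by
      simp [Fin.lt_def])

lemma fuss_unique {T T' : Fin (k+1) → Fin n → ℕ} (hT : IsFussTableau k n T)
    (hT' : IsFussTableau k n T') (h0 : ∀ j, T 0 j = T' 0 j) : T = T' := by
  have key : ∀ v (i : Fin (k+1)) (j : Fin n), T i j = v ↔ T' i j = v := by
    intro v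
    induction v using Nat.strong_induction_on with
    | _ v IH =>
    have H : ∀ (S S' : Fin (k+1) → Fin n → ℕ), IsFussTableau k n S →
        IsFussTableau k n S' → (∀ j, S 0 j = S' 0 j) →
        (∀ w, w < v → ∀ (i : Fin (k+1)) (j : Fin n), S i j = w ↔ S' i j = w) →
        ∀ i j, S i j = v → S' i j = v := by
      intro S S' hS hS' hrow hIH i j hv
      rcases Nat.eq_zero_or_pos (i : ℕ) with hi0 | hipos
      · have hieq : i = 0 := Fin.ext (by simp [hi0])
        subst hieq
        rw [← hrow j]; exact hv
      · obtain ⟨i₀, hi⟩ : ∃ i₀, (i:ℕ) = i₀ + 1 := ⟨(i:ℕ)-1, by omega⟩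
        have hik : i₀ + 1 < k + 1 := hi ▸ i.2
        have hieq : i = ⟨i₀+1, hik⟩ := Fin.ext (by simp [hi])
        have hv' : S ⟨i₀+1, hik⟩ j = v := by rw [← hieq]; exact hv
        have hvIcc : 1 ≤ v ∧ v ≤ (k+1)*n := by
          have := hS.1.1 i j; rw [hv] at this; exact Finset.mem_Icc.1 this
        obtain ⟨p, hp⟩ := fuss_surj hS'.1 v hvIcc.1 hvIcc.2
        have hp1 : (p.1 : ℕ) ≠ 0 := by
          intro h00
          have hp10 : p.1 = 0 := Fin.ext (by simp [h00])
          have hS0 : S 0 p.2 = v := by rw [hrow p.2, ← hp10]; exact hp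
          have heqp := hS.1.2.1
            (show (fun q : Fin (k+1) × Fin n => S q.1 q.2) (0, p.2)
              = (fun q : Fin (k+1) × Fin n => S q.1 q.2) (i, j) by
                simpa using hS0.trans hv.symm)
          have : (0 : Fin (k+1)) = i := congrArg Prod.fst heqp
          rw [← this] at hi
          simp at hi
        obtain ⟨i₁, hi1⟩ : ∃ i₁, (p.1:ℕ) = i₁ + 1 := ⟨(p.1:ℕ)-1, by omega⟩
        have hik1 : i₁ + 1 < k + 1 := hi1 ▸ p.1.2
        have hpeq : p.1 = ⟨i₁+1, hik1⟩ := Fin.ext (by simp [hi1])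
        have hv2 : S' ⟨i₁+1, hik1⟩ p.2 = v := by rw [← hpeq]; exact hp
        have hik0 : i₀ < k + 1 := Nat.lt_of_succ_lt hik
        have hik10 : i₁ < k + 1 := Nat.lt_of_succ_lt hik1
        -- previous-row entries
        set a := S ⟨i₀, hik0⟩ j with hadef
        have ha : a < v := by
          rw [← hv']
          exact hS.1.2.2.2 j (show (⟨i₀, hik0⟩ : Fin (k+1)) < ⟨i₀+1, hik⟩ by
            simp [Fin.lt_def])
        have hS'a : S' ⟨i₀, hik0⟩ j = a := (hIH a ha _ _).1 rfl
        set b := S' ⟨i₁, hik10⟩ p.2 with hbdef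
        have hb : b < v := by
          rw [← hv2]
          exact hS'.1.2.2.2 p.2 (show (⟨i₁, hik10⟩ : Fin (k+1)) < ⟨i₁+1, hik1⟩ by
            simp [Fin.lt_def])
        have hSb : S ⟨i₁, hik10⟩ p.2 = b := (hIH b hb _ _).2 rfl
        rw [hieq]
        -- trichotomy on S' (i₀+1) j
        rcases lt_trichotomy (S' ⟨i₀+1, hik⟩ j) v with hw' | hw' | hw'
        · exfalso
          have := (hIH _ hw' ⟨i₀+1, hik⟩ j).2 rfl
          rw [hv'] at this
          omega
        · exact hw'
        · -- trichotomy on S (i₁+1) p.2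
          rcases lt_trichotomy (S ⟨i₁+1, hik1⟩ p.2) v with hw | hw | hw
          · exfalso
            have := (hIH _ hw ⟨i₁+1, hik1⟩ p.2).1 rfl
            rw [hv2] at this
            omega
          · -- S (i₁+1) p.2 = v ⇒ same position
            have heqp := hS.1.2.1
              (show (fun q : Fin (k+1) × Fin n => S q.1 q.2) (⟨i₁+1, hik1⟩, p.2)
                = (fun q : Fin (k+1) × Fin n => S q.1 q.2) (⟨i₀+1, hik⟩, j) by
                  simpa using hw.trans hv'.symm)
            have h1 : (⟨i₁+1, hik1⟩ : Fin (k+1)) = ⟨i₀+1, hik⟩ :=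
              congrArg Prod.fst heqp
            have h2 : p.2 = j := congrArg Prod.snd heqp
            rw [← h1, ← h2]
            exact hv2
          · -- both slots strictly above v: apply minimality twice
            have min1 : S' ⟨i₁, hik10⟩ p.2 ≤ S' ⟨i₀, hik0⟩ j :=
              fuss_min hS' hik1 hik (c := j) (by rw [hS'a, hv2]; exact ha)
                (by rw [hv2]; exact hw')
            have min2 : S ⟨i₀, hik0⟩ j ≤ S ⟨i₁, hik10⟩ p.2 :=
              fuss_min hS hik hik1 (c := p.2) (by rw [hSb, hv']; exact hb)
                (by rw [hv']; exact hw)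
            have hab : a = b := by
              rw [hS'a] at min1
              rw [hSb] at min2
              omega
            have heqp := hS.1.2.1
              (show (fun q : Fin (k+1) × Fin n => S q.1 q.2) (⟨i₀, hik0⟩, j)
                = (fun q : Fin (k+1) × Fin n => S q.1 q.2) (⟨i₁, hik10⟩, p.2) by
                  simpa using (hadef.symm.trans hab).trans hSb.symm)
            have h1 : (⟨i₀, hik0⟩ : Fin (k+1)) = ⟨i₁, hik10⟩ :=
              congrArg Prod.fst heqp
            have h2 : j = p.2 := congrArg Prod.snd heqp
            have h3 : i₀ = i₁ := by
              have := congrArg Fin.val h1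
              simpa using this
            exfalso
            have hfin : (⟨i₁ + 1, hik1⟩ : Fin (k+1)) = ⟨i₀ + 1, hik⟩ :=
              Fin.ext (by simp [h3])
            rw [hfin, ← h2, hv'] at hw
            omega
    intro i j
    constructor
    · exact H T T' hT hT' h0 (fun w hw => IH w hw) i j
    · exact H T' T hT' hT (fun j => (h0 j).symm)
        (fun w hw i j => (IH w hw i j).symm) i j
  funext i j
  exact ((key (T' i j) i j).2 rfl)

lemma fuss_bound {T : Fin (k+1) → Fin n → ℕ} (hT : IsFussTableau k n T)
    (j : Fin n) : T 0 j ≤ 1 + (j : ℕ) * (k + 1) := by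
  classical
  set v := T 0 j with hvdef
  have hvIcc := Finset.mem_Icc.1 (hT.1.1 0 j)
  have hch : ∀ w ∈ Finset.Icc 1 (v - 1), ∃ p : Fin (k+1) × Fin n,
      T p.1 p.2 = w ∧ p.2 < j := by
    intro w hw
    rw [Finset.mem_Icc] at hw
    obtain ⟨p, hp⟩ := fuss_surj hT.1 w hw.1 (by omega)
    refine ⟨p, hp, ?_⟩
    have h0p : T 0 p.2 ≤ w := by
      rw [← hp]
      exact (hT.1.2.2.2 p.2).monotone (Fin.zero_le _)
    have : T 0 p.2 < T 0 j := by omega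
    by_contra hge
    push_neg at hge
    have := (hT.1.2.2.1 0).monotone hge
    omega
  set f : ℕ → Fin (k+1) × Fin n := fun w =>
    if h : ∃ p : Fin (k+1) × Fin n, T p.1 p.2 = w ∧ p.2 < j then h.choose
    else ⟨0, ⟨0, Fin.pos j⟩⟩ with hf
  have hcard : (Finset.Icc 1 (v-1)).card ≤
      ((Finset.univ : Finset (Fin (k+1))) ×ˢ
        (Finset.univ.filter (fun c : Fin n => c < j))).card := by
    apply Finset.card_le_card_of_injOn f
    · intro w hw
      have hex : ∃ p : Fin (k+1) × Fin n, T p.1 p.2 = w ∧ p.2 < j := hch w hw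
      rw [hf]
      simp only [dif_pos hex]
      obtain ⟨_, hlt⟩ := hex.choose_spec
      simp only [Finset.mem_coe, Finset.mem_product, Finset.mem_univ, Finset.mem_filter, true_and]
      exact hlt
    · intro w hw w' hw' heq
      have hex : ∃ p : Fin (k+1) × Fin n, T p.1 p.2 = w ∧ p.2 < j :=
        hch w (by simpa using hw)
      have hex' : ∃ p : Fin (k+1) × Fin n, T p.1 p.2 = w' ∧ p.2 < j :=
        hch w' (by simpa using hw')
      have e1 : T (f w).1 (f w).2 = w := by
        rw [hf]; simp only [dif_pos hex]; exact hex.choose_spec.1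
      have e1' : T (f w').1 (f w').2 = w' := by
        rw [hf]; simp only [dif_pos hex']; exact hex'.choose_spec.1
      rw [← e1, ← e1', heq]
  have hfc : ((Finset.univ : Finset (Fin (k+1))) ×ˢ
      (Finset.univ.filter (fun c : Fin n => c < j))).card = (k+1) * (j:ℕ) := by
    rw [Finset.card_product, Finset.card_univ, Fintype.card_fin]
    have hcc : (Finset.univ.filter (fun c : Fin n => c < j)) = Finset.Iio j := by
      ext c
      simp
    rw [hcc, Fin.card_Iio]
  rw [Nat.card_Icc, hfc] at hcard
  have : (j:ℕ) * (k+1) = (k+1) * (j:ℕ) := mul_comm _ _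
  omega

end Fuss

theorem statement10 (k n : ℕ) (hk : 0 < k) (hn : 0 < n) :
    (∀ T T' : Fin (k + 1) → Fin n → ℕ, IsFussTableau k n T → IsFussTableau k n T' →
      (∀ j, T 0 j = T' 0 j) → T = T') ∧
    (∀ t : Fin n → ℕ, StrictMono t → t ⟨0, hn⟩ = 1 →
      ((∃ T : Fin (k + 1) → Fin n → ℕ, IsFussTableau k n T ∧ ∀ j, T 0 j = t j) ↔
        ∀ j : Fin n, t j ≤ 1 + (j : ℕ) * (k + 1))) := by
  constructor
  · intro T T' hT hT' h0
    exact fuss_unique hT hT' h0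
  · intro t hmono ht1
    constructor
    · rintro ⟨T, hT, hrow⟩ j
      rw [← hrow j]
      exact fuss_bound hT j
    · intro hbd
      have hex := st10exu hk hn hmono ht1 hbd
      have HAV := st10HAV hk hn hmono ht1 hbd
      set F : ℕ → Fin n → ℕ :=
        fun i j => if h : i ≤ k then (hex i h j).choose else 0 with hFdef
      have hFmem : ∀ (i : ℕ) (h : i ≤ k) (j : Fin n),
          F i j ∈ Finset.Icc 1 ((k+1)*n) ∧ st10dep k t (F i j) = i ∧
            st10root k t (F i j) = t j := by
        intro i h j
        simp only [hFdef, dif_pos h]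
        exact (hex i h j).choose_spec.1
      have hFuniq : ∀ (i : ℕ) (h : i ≤ k) (j : Fin n) (u : ℕ),
          u ∈ Finset.Icc 1 ((k+1)*n) → st10dep k t u = i → st10root k t u = t j →
            u = F i j := by
        intro i h j u h1 h2 h3
        simp only [hFdef, dif_pos h]
        exact (hex i h j).choose_spec.2 u ⟨h1, h2, h3⟩
      have hF0 : ∀ j, F 0 j = t j := by
        intro j
        refine (hFuniq 0 (by omega) j (t j) ?_ ?_ ?_).symm
        · rw [Finset.mem_Icc]
          exact ⟨st10_t_ge hn hmono ht1 j, st10_t_le hk hn hbd j⟩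
        · exact st10dep_top k t _ ⟨j, rfl⟩
        · rw [st10root, st10dep_top k t _ ⟨j, rfl⟩]
          rfl
      have hFnontop : ∀ (i : ℕ), i + 1 ≤ k → ∀ j : Fin n,
          ¬ ∃ j', t j' = F (i+1) j := by
        rintro i h j ⟨j', hj'⟩
        have h1 := st10dep_top k t _ ⟨j', hj'⟩
        have h2 := (hFmem (i+1) h j).2.1
        omega
      have hFpar : ∀ (i : ℕ) (h : i + 1 ≤ k) (j : Fin n),
          st10par k t (F (i+1) j) = F i j := by
        intro i h j
        obtain ⟨hm, hd, hr⟩ := hFmem (i+1) h j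
        rw [Finset.mem_Icc] at hm
        have hnt := hFnontop i h j
        obtain ⟨p1, p2, p3, p4⟩ := st10step HAV hm.1 (by omega) hnt
        apply hFuniq i (by omega) j
        · rw [Finset.mem_Icc]; omega
        · omega
        · rw [← hr, st10root, st10root, hd,
            show st10dep k t (st10par k t (F (i+1) j)) = i by omega]
          exact (Function.iterate_succ_apply _ _ _).symm
      have hcolstep : ∀ (i : ℕ) (h : i + 1 ≤ k) (j : Fin n), F i j < F (i+1) j := by
        intro i h j
        obtain ⟨hm, hd, hr⟩ := hFmem (i+1) h j
        rw [Finset.mem_Icc] at hm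
        obtain ⟨p1, p2, p3, p4⟩ := st10step HAV hm.1 (by omega) (hFnontop i h j)
        rw [← hFpar i h j]
        exact p2
      have hchild : ∀ u u', u ∈ Finset.Icc 1 ((k+1)*n) → u' ∈ Finset.Icc 1 ((k+1)*n) →
          (¬ ∃ j', t j' = u) → (¬ ∃ j', t j' = u') →
          st10par k t u < st10par k t u' → u < u' := by
        intro u u' hm hm' hnt hnt' hpp
        rw [Finset.mem_Icc] at hm hm'
        rcases lt_trichotomy u u' with h | h | h
        · exact h
        · exfalso; rw [h] at hpp; exact lt_irrefl _ hpp
        · exfalso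
          have := st10par_mono k t hm'.1 h hnt' hnt
            (HAV u' (by omega) hm'.1 hnt') (HAV u (by omega) hm.1 hnt)
          omega
      have hrowmono : ∀ (i : ℕ), i ≤ k → ∀ (j j' : Fin n), j < j' → F i j < F i j' := by
        intro i
        induction i with
        | zero => intro _ j j' hj; rw [hF0 j, hF0 j']; exact hmono hj
        | succ i ih =>
          intro h j j' hj
          have hpp : st10par k t (F (i+1) j) < st10par k t (F (i+1) j') := by
            rw [hFpar i h j, hFpar i h j']
            exact ih (by omega) j j' hj
          exact hchild _ _ (hFmem _ h j).1 (hFmem _ h j').1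
            (hFnontop i h j) (hFnontop i h j') hpp
      have hcolmono : ∀ (d i : ℕ) (j : Fin n), i + d + 1 ≤ k → F i j < F (i+d+1) j := by
        intro d
        induction d with
        | zero => intro i j h; exact hcolstep i h j
        | succ d ih =>
          intro i j h
          exact lt_trans (ih i j (by omega)) (hcolstep (i+d+1) (by omega) j)
      have hcolmono' : ∀ (i i' : ℕ), i < i' → i' ≤ k → ∀ j : Fin n, F i j < F i' j := by
        intro i i' hii hik j
        obtain ⟨d, rfl⟩ : ∃ d, i' = i + d + 1 := ⟨i' - i - 1, by omega⟩
        exact hcolmono d i j hik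
      refine ⟨fun i j => F (i : ℕ) j, ⟨⟨?_, ?_, ?_, ?_⟩, ?_⟩, ?_⟩
      · intro i j
        exact (hFmem (i : ℕ) (by omega) j).1
      · intro p q h
        simp only at h
        have hd1 := (hFmem (p.1 : ℕ) (by omega) p.2).2.1
        have hd2 := (hFmem (q.1 : ℕ) (by omega) q.2).2.1
        have hr1 := (hFmem (p.1 : ℕ) (by omega) p.2).2.2
        have hr2 := (hFmem (q.1 : ℕ) (by omega) q.2).2.2
        rw [h] at hd1 hr1
        have hj : p.2 = q.2 := hmono.injective (hr1.symm.trans hr2)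
        have hi : p.1 = q.1 := Fin.ext (by omega)
        exact Prod.ext hi hj
      · intro i
        intro j j' hj
        exact hrowmono (i : ℕ) (by omega) j j' hj
      · intro j
        intro a b hab
        exact hcolmono' (a : ℕ) (b : ℕ) (Fin.lt_def.1 hab) (by omega) j
      · intro i hi j r r' c hrr h
        obtain ⟨h1, h2, h3⟩ := h
        simp only at h1 h2 h3
        have hrr' : (r : ℕ) < (r' : ℕ) := Fin.lt_def.1 hrr
        have hr1k : (r : ℕ) + 1 ≤ k := by have := r'.2; omega
        have hik : (i : ℕ) + 1 ≤ k := by omega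
        have hpp : st10par k t (F ((i : ℕ)+1) j) < st10par k t (F ((r : ℕ)+1) c) := by
          rw [hFpar (i : ℕ) hik j, hFpar (r : ℕ) hr1k c]
          exact h1
        have hlt : F ((i : ℕ)+1) j < F ((r : ℕ)+1) c :=
          hchild _ _ (hFmem _ hik j).1 (hFmem _ hr1k c).1
            (hFnontop _ hik j) (hFnontop _ hr1k c) hpp
        have hle : F ((r : ℕ)+1) c ≤ F (r' : ℕ) c := by
          rcases eq_or_lt_of_le (show (r : ℕ) + 1 ≤ (r' : ℕ) by omega) with he | hl
          · rw [he]
          · exact (hcolmono' _ _ hl (by omega) c).le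
        omega
      · intro j
        exact hF0 j
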